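/- arXiv:1009.2376 — 3 statements merged into one kernel-verified Lean document; each statement's English description precedes it below -/
import Mathlib

section
/- Let W₁ and W₂ be graphons on the same probability space S, and let W₁' be a {0,1}-valued step graphon on S whose associated partition has n parts. Then ‖W₁ − W₂‖_{L¹(S²)} ≤ n² ‖W₁ − W₂‖_□ + 2‖W₁ − W₁'‖_{L¹(S²)}. -/
open MeasureTheory

/-- The cut norm defined with measurable sets. -/
noncomputable def cutNorm1 {S : Type*} [MeasurableSpace S] (μ : Measure S)
    (W : S → S → ℝ) : ℝ :=
  sSup {r : ℝ | ∃ A B : Set S, MeasurableSet A ∧ MeasurableSet B ∧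
    r = |∫ p in A ×ˢ B, W p.1 p.2 ∂(μ.prod μ)|}

/-- If `W₁, W₂` are graphons on `S` and `W₁'` is a `{0,1}`-valued step graphon with an
associated partition into `n` parts, then
`‖W₁ − W₂‖₁ ≤ n² ‖W₁ − W₂‖_□ + 2 ‖W₁ − W₁'‖₁`. -/
theorem L1_le_cutNorm_add_stepApprox {S : Type*} [MeasurableSpace S]
    (μ : Measure S) [IsProbabilityMeasure μ] (n : ℕ)
    (W₁ W₂ W₁' : S → S → ℝ)
    (hW₁m : Measurable (fun p : S × S => W₁ p.1 p.2))
    (hW₂m : Measurable (fun p : S × S => W₂ p.1 p.2))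
    (hW₁'m : Measurable (fun p : S × S => W₁' p.1 p.2))
    (hW₁sym : ∀ x y, W₁ x y = W₁ y x)
    (hW₂sym : ∀ x y, W₂ x y = W₂ y x)
    (hW₁'sym : ∀ x y, W₁' x y = W₁' y x)
    (hW₁r : ∀ x y, W₁ x y ∈ Set.Icc (0 : ℝ) 1)
    (hW₂r : ∀ x y, W₂ x y ∈ Set.Icc (0 : ℝ) 1)
    (hW₁'r : ∀ x y, W₁' x y = 0 ∨ W₁' x y = 1)
    (A : Fin n → Set S)
    (hAmeas : ∀ i, MeasurableSet (A i))
    (hAdisj : Pairwise (Function.onFun Disjoint A))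
    (hAcover : (⋃ i, A i) = Set.univ)
    (hstep : ∀ i j, ∃ c : ℝ, ∀ x ∈ A i, ∀ y ∈ A j, W₁' x y = c) :
    (∫ p, |W₁ p.1 p.2 - W₂ p.1 p.2| ∂(μ.prod μ)) ≤
      (n : ℝ) ^ 2 * cutNorm1 μ (fun x y => W₁ x y - W₂ x y) +
        2 * ∫ p, |W₁ p.1 p.2 - W₁' p.1 p.2| ∂(μ.prod μ) := by
  set ν := μ.prod μ with hν
  set f : S × S → ℝ := fun p => W₁ p.1 p.2 - W₂ p.1 p.2 with hfdef
  set g : S × S → ℝ := fun p => W₁ p.1 p.2 - W₁' p.1 p.2 with hgdef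
  set h : S × S → ℝ := fun p => W₁' p.1 p.2 - W₂ p.1 p.2 with hhdef
  have hW₁'b : ∀ x y, W₁' x y ∈ Set.Icc (0:ℝ) 1 := by
    intro x y; rcases hW₁'r x y with h0 | h0 <;> simp [h0]
  have int_bdd : ∀ F : S × S → ℝ, Measurable F → (∀ p, |F p| ≤ 2) → Integrable F ν := by
    intro F hFm hFb
    refine Integrable.mono' (integrable_const 2) hFm.aestronglyMeasurable ?_
    filter_upwards with p
    simpa [Real.norm_eq_abs] using hFb p
  have habs : ∀ a b : ℝ, a ∈ Set.Icc (0:ℝ) 1 → b ∈ Set.Icc (0:ℝ) 1 → |a - b| ≤ 2 := by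
    intro a b ha hb
    rw [abs_sub_le_iff]
    exact ⟨by linarith [ha.2, hb.1], by linarith [ha.1, hb.2]⟩
  have hint_f : Integrable f ν :=
    int_bdd f (hW₁m.sub hW₂m) fun p => habs _ _ (hW₁r _ _) (hW₂r _ _)
  have hint_g : Integrable g ν :=
    int_bdd g (hW₁m.sub hW₁'m) fun p => habs _ _ (hW₁r _ _) (hW₁'b _ _)
  have hint_h : Integrable h ν :=
    int_bdd h (hW₁'m.sub hW₂m) fun p => habs _ _ (hW₁'b _ _) (hW₂r _ _)
  have hint_fa : Integrable (fun p => |f p|) ν := hint_f.abs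
  have hint_ga : Integrable (fun p => |g p|) ν := hint_g.abs
  have hint_ha : Integrable (fun p => |h p|) ν := hint_h.abs
  -- cut norm bound
  have hcut : ∀ P Q : Set S, MeasurableSet P → MeasurableSet Q →
      |∫ p in P ×ˢ Q, f p ∂ν| ≤ cutNorm1 μ (fun x y => W₁ x y - W₂ x y) := by
    intro P Q hP hQ
    apply le_csSup
    · refine ⟨∫ p, |f p| ∂ν, ?_⟩
      rintro r ⟨P', Q', hP', hQ', rfl⟩
      calc |∫ p in P' ×ˢ Q', (fun x y => W₁ x y - W₂ x y) p.1 p.2 ∂ν|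
          ≤ ∫ p in P' ×ˢ Q', |f p| ∂ν := by
            simpa [Real.norm_eq_abs] using
              norm_integral_le_integral_norm (μ := ν.restrict (P' ×ˢ Q')) f
        _ ≤ ∫ p, |f p| ∂ν :=
            setIntegral_le_integral hint_fa (Filter.Eventually.of_forall fun p => abs_nonneg _)
    · exact ⟨P, Q, hP, hQ, rfl⟩
  -- blocks
  set B : Fin n × Fin n → Set (S × S) := fun ij => A ij.1 ×ˢ A ij.2 with hBdef
  have hBmeas : ∀ ij, MeasurableSet (B ij) := fun ij => (hAmeas ij.1).prod (hAmeas ij.2)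
  have hBdisj : Pairwise (Function.onFun Disjoint B) := by
    rintro ⟨i, j⟩ ⟨k, l⟩ hne
    have hkl : i ≠ k ∨ j ≠ l := by
      by_contra hcon
      push_neg at hcon
      exact hne (by simp [hcon.1, hcon.2])
    rcases hkl with hik | hjl
    · exact Set.disjoint_prod.2 (Or.inl (hAdisj hik))
    · exact Set.disjoint_prod.2 (Or.inr (hAdisj hjl))
  have hBcover : (⋃ ij, B ij) = Set.univ := by
    ext p
    simp only [Set.mem_iUnion, Set.mem_univ, iff_true]
    have h1 : p.1 ∈ ⋃ i, A i := hAcover ▸ Set.mem_univ _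
    have h2 : p.2 ∈ ⋃ i, A i := hAcover ▸ Set.mem_univ _
    obtain ⟨i, hi⟩ := Set.mem_iUnion.1 h1
    obtain ⟨j, hj⟩ := Set.mem_iUnion.1 h2
    exact ⟨(i, j), hi, hj⟩
  have hdecomp : ∀ F : S × S → ℝ, Integrable F ν →
      ∫ p, F p ∂ν = ∑ ij : Fin n × Fin n, ∫ p in B ij, F p ∂ν := by
    intro F hF
    rw [← setIntegral_univ (μ := ν) (f := F), ← hBcover,
      integral_iUnion_fintype hBmeas hBdisj fun ij => hF.integrableOn]
  -- block estimate
  have hblock : ∀ ij : Fin n × Fin n,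
      ∫ p in B ij, |h p| ∂ν ≤
        cutNorm1 μ (fun x y => W₁ x y - W₂ x y) + ∫ p in B ij, |g p| ∂ν := by
    rintro ⟨i, j⟩
    obtain ⟨c, hc⟩ := hstep i j
    have hfg : ∫ p in B (i, j), h p ∂ν =
        (∫ p in B (i, j), f p ∂ν) - ∫ p in B (i, j), g p ∂ν := by
      rw [← integral_sub hint_f.integrableOn hint_g.integrableOn]
      apply integral_congr_ae
      filter_upwards with p
      simp only [hfdef, hgdef, hhdef]
      ring
    have hgabs : ∫ p in B (i, j), g p ∂ν ≤ ∫ p in B (i, j), |g p| ∂ν :=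
      integral_mono hint_g.integrableOn hint_ga.integrableOn fun p => le_abs_self _
    have hgabs' : -(∫ p in B (i, j), g p ∂ν) ≤ ∫ p in B (i, j), |g p| ∂ν := by
      rw [← integral_neg]
      exact integral_mono hint_g.integrableOn.neg hint_ga.integrableOn fun p => by
        simpa using neg_le_abs (g p)
    have hfcut : |∫ p in B (i, j), f p ∂ν| ≤ cutNorm1 μ (fun x y => W₁ x y - W₂ x y) :=
      hcut (A i) (A j) (hAmeas i) (hAmeas j)
    rcases Set.eq_empty_or_nonempty (B (i, j)) with hemp | hne
    · rw [hemp]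
      simp only [Measure.restrict_empty, integral_zero_measure]
      have := le_trans (abs_nonneg _) hfcut
      positivity
    · obtain ⟨⟨x, y⟩, hx, hy⟩ := hne
      have hc01 : c = 0 ∨ c = 1 := by
        rw [← hc x hx y hy]; exact hW₁'r x y
      rcases hc01 with rfl | rfl
      · -- c = 0 : |h| = -h on the block
        have heq : Set.EqOn (fun p => |h p|) (fun p => -(h p)) (B (i, j)) := by
          rintro ⟨a, b⟩ ⟨ha, hb⟩
          have hv := hc a ha b hb
          have := (hW₂r a b).1
          simp only [hhdef]
          rw [abs_of_nonpos (by simp [hv]; linarith)]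
        rw [setIntegral_congr_fun (hBmeas (i, j)) heq, integral_neg, hfg]
        have := neg_le_abs (∫ p in B (i, j), f p ∂ν)
        linarith
      · -- c = 1 : |h| = h on the block
        have heq : Set.EqOn (fun p => |h p|) h (B (i, j)) := by
          rintro ⟨a, b⟩ ⟨ha, hb⟩
          have hv := hc a ha b hb
          have := (hW₂r a b).2
          simp only [hhdef]
          rw [abs_of_nonneg (by simp [hv]; linarith)]
        rw [setIntegral_congr_fun (hBmeas (i, j)) heq, hfg]
        have := le_abs_self (∫ p in B (i, j), f p ∂ν)
        linarith
  -- assemble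
  have hsum : ∫ p, |h p| ∂ν ≤
      (n : ℝ) ^ 2 * cutNorm1 μ (fun x y => W₁ x y - W₂ x y) + ∫ p, |g p| ∂ν := by
    rw [hdecomp _ hint_ha, hdecomp _ hint_ga]
    calc ∑ ij : Fin n × Fin n, ∫ p in B ij, |h p| ∂ν
        ≤ ∑ ij : Fin n × Fin n, (cutNorm1 μ (fun x y => W₁ x y - W₂ x y)
            + ∫ p in B ij, |g p| ∂ν) := Finset.sum_le_sum fun ij _ => hblock ij
      _ = (n : ℝ) ^ 2 * cutNorm1 μ (fun x y => W₁ x y - W₂ x y)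
            + ∑ ij : Fin n × Fin n, ∫ p in B ij, |g p| ∂ν := by
          rw [Finset.sum_add_distrib, Finset.sum_const]
          simp [Finset.card_univ, sq, mul_comm]
  have htri : ∫ p, |f p| ∂ν ≤ (∫ p, |g p| ∂ν) + ∫ p, |h p| ∂ν := by
    rw [← integral_add hint_ga hint_ha]
    refine integral_mono hint_fa (hint_ga.add hint_ha) fun p => ?_
    have : f p = g p + h p := by simp only [hfdef, hgdef, hhdef]; ring
    rw [this]
    exact abs_add_le _ _
  linarith
end

section
/- If W₁ is a {0,1}-valued n-step graphon and W₂ is an arbitrary graphon on the same probability space, then ‖W₁ − W₂‖_{L¹} ≤ n² ‖W₁ − W₂‖_□. -/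
open MeasureTheory

/-- If `W₁` is a `{0,1}`-valued `n`-step graphon and `W₂` is an arbitrary graphon
on the same probability space, then `‖W₁ − W₂‖₁ ≤ n² ‖W₁ − W₂‖_□`. -/
theorem L1_le_sq_mul_cutNorm {S : Type*} [MeasurableSpace S]
    (μ : Measure S) [IsProbabilityMeasure μ] (n : ℕ)
    (W₁ W₂ : S → S → ℝ)
    (hW₁m : Measurable (fun p : S × S => W₁ p.1 p.2))
    (hW₂m : Measurable (fun p : S × S => W₂ p.1 p.2))
    (hW₁sym : ∀ x y, W₁ x y = W₁ y x)
    (hW₂sym : ∀ x y, W₂ x y = W₂ y x)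
    (hW₁r : ∀ x y, W₁ x y = 0 ∨ W₁ x y = 1)
    (hW₂r : ∀ x y, W₂ x y ∈ Set.Icc (0 : ℝ) 1)
    (A : Fin n → Set S)
    (hAmeas : ∀ i, MeasurableSet (A i))
    (hAdisj : Pairwise (Function.onFun Disjoint A))
    (hAcover : (⋃ i, A i) = Set.univ)
    (hstep : ∀ i j, ∃ c : ℝ, ∀ x ∈ A i, ∀ y ∈ A j, W₁ x y = c) :
    (∫ p, |W₁ p.1 p.2 - W₂ p.1 p.2| ∂(μ.prod μ)) ≤
      (n : ℝ) ^ 2 * cutNorm1 μ (fun x y => W₁ x y - W₂ x y) := by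
  simp only [cutNorm1]
  set f : S × S → ℝ := fun p => W₁ p.1 p.2 - W₂ p.1 p.2 with hfdef
  have hbound : ∀ p : S × S, ‖f p‖ ≤ 1 := by
    intro p
    have h2 := hW₂r p.1 p.2
    rcases hW₁r p.1 p.2 with h1 | h1 <;>
      simp only [hfdef, Real.norm_eq_abs, abs_sub_le_iff] <;>
      constructor <;> linarith [h2.1, h2.2]
  have hfm : Measurable f := hW₁m.sub hW₂m
  have hfi : Integrable f (μ.prod μ) :=
    ⟨hfm.aestronglyMeasurable, HasFiniteIntegral.of_bounded (C := 1) (ae_of_all _ hbound)⟩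
  have hfai : Integrable (fun p => |f p|) (μ.prod μ) := hfi.abs
  set cn := sSup {r : ℝ | ∃ A B : Set S, MeasurableSet A ∧ MeasurableSet B ∧
        r = |∫ p in A ×ˢ B, f p ∂(μ.prod μ)|} with hcn
  have hbdd : BddAbove {r : ℝ | ∃ A B : Set S, MeasurableSet A ∧ MeasurableSet B ∧
        r = |∫ p in A ×ˢ B, f p ∂(μ.prod μ)|} := by
    refine ⟨∫ p, |f p| ∂(μ.prod μ), ?_⟩
    rintro r ⟨C, D, hC, hD, rfl⟩
    calc |∫ p in C ×ˢ D, f p ∂(μ.prod μ)| ≤ ∫ p in C ×ˢ D, |f p| ∂(μ.prod μ) :=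
          (Real.norm_eq_abs _ ▸ norm_integral_le_integral_norm _ : _)
      _ ≤ ∫ p, |f p| ∂(μ.prod μ) :=
          setIntegral_le_integral hfai (ae_of_all _ fun p => abs_nonneg _)
  -- blocks
  set B : Fin n × Fin n → Set (S × S) := fun p => A p.1 ×ˢ A p.2 with hB
  have hBmeas : ∀ p, MeasurableSet (B p) := fun p => (hAmeas p.1).prod (hAmeas p.2)
  have hBdisj : Pairwise (Function.onFun Disjoint B) := by
    rintro ⟨i, j⟩ ⟨k, l⟩ hne
    rw [Function.onFun, Set.disjoint_left]
    rintro ⟨x, y⟩ ⟨hx1, hy1⟩ ⟨hx2, hy2⟩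
    have hik : i = k := by
      by_contra h
      exact (hAdisj h).le_bot ⟨hx1, hx2⟩
    have hjl : j = l := by
      by_contra h
      exact (hAdisj h).le_bot ⟨hy1, hy2⟩
    exact hne (by simp [hik, hjl])
  have hBcover : (⋃ p, B p) = Set.univ := by
    ext ⟨x, y⟩
    simp only [Set.mem_iUnion, Set.mem_univ, iff_true]
    have hx : x ∈ ⋃ i, A i := hAcover ▸ Set.mem_univ x
    have hy : y ∈ ⋃ i, A i := hAcover ▸ Set.mem_univ y
    obtain ⟨i, hi⟩ := Set.mem_iUnion.1 hx
    obtain ⟨j, hj⟩ := Set.mem_iUnion.1 hy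
    exact ⟨(i, j), hi, hj⟩
  have hsplit : (∫ p, |f p| ∂(μ.prod μ)) = ∑ p : Fin n × Fin n, ∫ q in B p, |f q| ∂(μ.prod μ) := by
    rw [← setIntegral_univ, ← hBcover, integral_iUnion hBmeas hBdisj (hBcover ▸ hfai.integrableOn),
      tsum_fintype]
  rw [hsplit]
  have hblock : ∀ p : Fin n × Fin n, (∫ q in B p, |f q| ∂(μ.prod μ)) ≤ cn := by
    rintro ⟨i, j⟩
    have hmem : |∫ q in B (i, j), f q ∂(μ.prod μ)| ∈ {r : ℝ | ∃ C D : Set S,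
        MeasurableSet C ∧ MeasurableSet D ∧ r = |∫ p in C ×ˢ D, f p ∂(μ.prod μ)|} :=
      ⟨A i, A j, hAmeas i, hAmeas j, rfl⟩
    have hle : |∫ q in B (i, j), f q ∂(μ.prod μ)| ≤ cn := le_csSup hbdd hmem
    refine le_trans ?_ hle
    rcases Set.eq_empty_or_nonempty (B (i, j)) with he | ⟨⟨x, y⟩, hx, hy⟩
    · simp [he]
    · obtain ⟨c, hc⟩ := hstep i j
      have hcval : c = 0 ∨ c = 1 := (hc x hx y hy) ▸ hW₁r x y
      rcases hcval with h0 | h1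
      · have : ∀ q ∈ B (i, j), |f q| = -f q := by
          rintro ⟨u, v⟩ ⟨hu, hv⟩
          have := hc u hu v hv
          have h2 := hW₂r u v
          simp only [hfdef]
          rw [abs_of_nonpos] <;> simp only [this, h0] <;> linarith [h2.1]
        rw [setIntegral_congr_fun (hBmeas (i, j)) this, integral_neg]
        exact neg_le_abs _
      · have : ∀ q ∈ B (i, j), |f q| = f q := by
          rintro ⟨u, v⟩ ⟨hu, hv⟩
          have := hc u hu v hv
          have h2 := hW₂r u v
          simp only [hfdef]
          rw [abs_of_nonneg]; simp only [this, h1]; linarith [h2.2]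
        rw [setIntegral_congr_fun (hBmeas (i, j)) this]
        exact le_abs_self _
  calc ∑ p : Fin n × Fin n, ∫ q in B p, |f q| ∂(μ.prod μ)
      ≤ ∑ _p : Fin n × Fin n, cn := Finset.sum_le_sum fun p _ => hblock p
    _ = (n : ℝ) ^ 2 * cn := by rw [Finset.sum_const, Finset.card_univ, Fintype.card_prod, Fintype.card_fin, nsmul_eq_mul]; push_cast; ring
end

section
/- Let W and W₁, W₂, … be graphons on a common probability space S with W {0,1}-valued almost everywhere. Then ‖W_n − W‖_□ → 0 if and only if ‖W_n − W‖_{L¹(S²)} → 0. -/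
open MeasureTheory Filter

section Aux

variable {S : Type*} [MeasurableSpace S]

/-- A finite linear combination of indicators of measurable rectangles,
with `c` the sum of the absolute values of the coefficients. -/
def RectComb (F : S × S → ℝ) (c : ℝ) : Prop :=
  ∃ (ι : Type) (_ : Fintype ι) (a : ι → ℝ) (A B : ι → Set S),
    (∀ i, MeasurableSet (A i)) ∧ (∀ i, MeasurableSet (B i)) ∧
    (∀ p, F p = ∑ i, a i * (A i ×ˢ B i).indicator (fun _ => (1:ℝ)) p) ∧
    c = ∑ i, |a i|

lemma RectComb.c_nonneg {F : S × S → ℝ} {c : ℝ} (h : RectComb F c) : 0 ≤ c := by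
  obtain ⟨ι, _, a, A, B, _, _, _, rfl⟩ := h
  exact Finset.sum_nonneg fun i _ => abs_nonneg _

lemma rectComb_rect {A B : Set S} (hA : MeasurableSet A) (hB : MeasurableSet B) :
    RectComb ((A ×ˢ B).indicator (fun _ => (1:ℝ))) 1 :=
  ⟨PUnit, inferInstance, fun _ => 1, fun _ => A, fun _ => B, fun _ => hA, fun _ => hB,
    fun p => by simp, by simp⟩

lemma rectComb_zero : RectComb (fun _ : S × S => (0:ℝ)) 0 :=
  ⟨PEmpty, inferInstance, fun i => i.elim, fun i => i.elim, fun i => i.elim,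
    fun i => i.elim, fun i => i.elim, fun p => by simp, by simp⟩

lemma rectComb_one : RectComb (fun _ : S × S => (1:ℝ)) 1 := by
  have := rectComb_rect (A := (Set.univ : Set S)) (B := (Set.univ : Set S))
    MeasurableSet.univ MeasurableSet.univ
  convert this using 1
  funext p
  simp

lemma RectComb.add {F₁ F₂ : S × S → ℝ} {c₁ c₂ : ℝ} (h₁ : RectComb F₁ c₁)
    (h₂ : RectComb F₂ c₂) : RectComb (fun p => F₁ p + F₂ p) (c₁ + c₂) := by
  obtain ⟨ι₁, _, a₁, A₁, B₁, hA₁, hB₁, hF₁, rfl⟩ := h₁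
  obtain ⟨ι₂, _, a₂, A₂, B₂, hA₂, hB₂, hF₂, rfl⟩ := h₂
  refine ⟨ι₁ ⊕ ι₂, inferInstance, Sum.elim a₁ a₂, Sum.elim A₁ A₂, Sum.elim B₁ B₂,
    fun i => ?_, fun i => ?_, fun p => ?_, ?_⟩
  · cases i with
    | inl i => exact hA₁ i
    | inr i => exact hA₂ i
  · cases i with
    | inl i => exact hB₁ i
    | inr i => exact hB₂ i
  · simp [Fintype.sum_sum_type, hF₁ p, hF₂ p]
  · simp [Fintype.sum_sum_type]

lemma RectComb.neg {F : S × S → ℝ} {c : ℝ} (h : RectComb F c) :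
    RectComb (fun p => -(F p)) c := by
  obtain ⟨ι, _, a, A, B, hA, hB, hF, rfl⟩ := h
  refine ⟨ι, inferInstance, fun i => -(a i), A, B, hA, hB, fun p => ?_, by simp⟩
  show -(F p) = _
  rw [hF p, ← Finset.sum_neg_distrib]
  exact Finset.sum_congr rfl fun i _ => (neg_mul _ _).symm

lemma RectComb.sub {F₁ F₂ : S × S → ℝ} {c₁ c₂ : ℝ} (h₁ : RectComb F₁ c₁)
    (h₂ : RectComb F₂ c₂) : RectComb (fun p => F₁ p - F₂ p) (c₁ + c₂) := by
  have h := h₁.add h₂.neg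
  have e : (fun p => F₁ p - F₂ p) = fun p => F₁ p + -(F₂ p) :=
    funext fun p => sub_eq_add_neg _ _
  rw [e]; exact h

lemma indicator_rect_mul {A B C D : Set S} (p : S × S) :
    (A ×ˢ B).indicator (fun _ => (1:ℝ)) p * (C ×ˢ D).indicator (fun _ => (1:ℝ)) p =
      ((A ∩ C) ×ˢ (B ∩ D)).indicator (fun _ => (1:ℝ)) p := by
  rw [← Set.prod_inter_prod]
  by_cases h1 : p ∈ A ×ˢ B <;> by_cases h2 : p ∈ C ×ˢ D <;>
    simp [Set.indicator_apply, Set.mem_inter_iff, h1, h2]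

lemma RectComb.mul {F₁ F₂ : S × S → ℝ} {c₁ c₂ : ℝ} (h₁ : RectComb F₁ c₁)
    (h₂ : RectComb F₂ c₂) : RectComb (fun p => F₁ p * F₂ p) (c₁ * c₂) := by
  obtain ⟨ι₁, _, a₁, A₁, B₁, hA₁, hB₁, hF₁, rfl⟩ := h₁
  obtain ⟨ι₂, _, a₂, A₂, B₂, hA₂, hB₂, hF₂, rfl⟩ := h₂
  refine ⟨ι₁ × ι₂, inferInstance, fun q => a₁ q.1 * a₂ q.2,
    fun q => A₁ q.1 ∩ A₂ q.2, fun q => B₁ q.1 ∩ B₂ q.2,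
    fun q => (hA₁ q.1).inter (hA₂ q.2), fun q => (hB₁ q.1).inter (hB₂ q.2),
    fun p => ?_, ?_⟩
  · show F₁ p * F₂ p = _
    rw [hF₁ p, hF₂ p, Finset.sum_mul_sum, Fintype.sum_prod_type]
    refine Finset.sum_congr rfl fun i _ => Finset.sum_congr rfl fun j _ => ?_
    rw [← indicator_rect_mul]
    ring
  · simp only [Fintype.sum_prod_type, abs_mul]
    rw [Finset.sum_mul_sum]

end Aux

section Aux2

set_option linter.unusedSectionVars false

variable {S : Type*} [MeasurableSpace S]

/-- Rectangles with measurable sides. -/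
def rectFamily (S : Type*) [MeasurableSpace S] : Set (Set (S × S)) :=
  Set.image2 (· ×ˢ ·) { A : Set S | MeasurableSet A } { B : Set S | MeasurableSet B }

lemma rectComb_of_mem_generateSetAlgebra {T : Set (S × S)}
    (hT : T ∈ MeasureTheory.generateSetAlgebra (rectFamily S)) :
    ∃ c, RectComb (T.indicator (fun _ => (1:ℝ))) c := by
  induction hT with
  | base s hs =>
    obtain ⟨A, hA, B, hB, rfl⟩ := hs
    exact ⟨1, rectComb_rect hA hB⟩
  | empty =>
    refine ⟨0, ?_⟩
    have : (∅ : Set (S × S)).indicator (fun _ => (1:ℝ)) = fun _ => 0 := by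
      funext p; simp
    rw [this]; exact rectComb_zero
  | compl s hs ih =>
    obtain ⟨c, hc⟩ := ih
    refine ⟨1 + c, ?_⟩
    have : sᶜ.indicator (fun _ => (1:ℝ)) =
        fun p => (1:ℝ) - s.indicator (fun _ => (1:ℝ)) p := by
      funext p
      by_cases hp : p ∈ s <;> simp [Set.indicator_apply, hp]
    rw [this]
    exact rectComb_one.sub hc
  | union s t hs ht ihs iht =>
    obtain ⟨cs, hcs⟩ := ihs
    obtain ⟨ct, hct⟩ := iht
    refine ⟨cs + ct + cs * ct, ?_⟩
    have : (s ∪ t).indicator (fun _ => (1:ℝ)) = fun p =>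
        (s.indicator (fun _ => (1:ℝ)) p + t.indicator (fun _ => (1:ℝ)) p) -
          s.indicator (fun _ => (1:ℝ)) p * t.indicator (fun _ => (1:ℝ)) p := by
      funext p
      by_cases hp : p ∈ s <;> by_cases hq : p ∈ t <;>
        simp [Set.indicator_apply, hp, hq]
    rw [this]
    exact (hcs.add hct).sub (hcs.mul hct)

end Aux2

section Aux3

set_option linter.unusedSectionVars false

variable {S : Type*} [MeasurableSpace S] (μ : Measure S) [IsProbabilityMeasure μ]

/-- The set of values whose sup is the cut norm. -/
def cutSet (V : S × S → ℝ) : Set ℝ :=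
  {r : ℝ | ∃ A B : Set S, MeasurableSet A ∧ MeasurableSet B ∧
    r = |∫ p in A ×ˢ B, V p ∂(μ.prod μ)|}

variable {V : S × S → ℝ} (hVm : Measurable V) (hVb : ∀ p, |V p| ≤ 1)

lemma integrable_of_bdd {G : S × S → ℝ} (hGm : Measurable G) (hGb : ∀ p, |G p| ≤ 1) :
    Integrable G (μ.prod μ) := by
  refine Integrable.mono' (integrable_const (1:ℝ)) hGm.aestronglyMeasurable ?_
  exact Filter.Eventually.of_forall fun p => by simpa using hGb p

include hVm hVb

lemma zero_mem_cutSet : (0:ℝ) ∈ cutSet μ V := by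
  exact ⟨∅, ∅, MeasurableSet.empty, MeasurableSet.empty, by simp⟩

lemma cutSet_le (r : ℝ) (hr : r ∈ cutSet μ V) : r ≤ ∫ p, |V p| ∂(μ.prod μ) := by
  obtain ⟨A, B, hA, hB, rfl⟩ := hr
  calc |∫ p in A ×ˢ B, V p ∂(μ.prod μ)| ≤ ∫ p in A ×ˢ B, |V p| ∂(μ.prod μ) := by
        simpa [Real.norm_eq_abs] using
          norm_integral_le_integral_norm (μ := (μ.prod μ).restrict (A ×ˢ B)) V
    _ ≤ ∫ p, |V p| ∂(μ.prod μ) :=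
        setIntegral_le_integral ((integrable_of_bdd μ hVm hVb).abs)
          (Filter.Eventually.of_forall fun p => abs_nonneg _)

lemma bddAbove_cutSet : BddAbove (cutSet μ V) :=
  ⟨∫ p, |V p| ∂(μ.prod μ), fun r hr => cutSet_le μ hVm hVb r hr⟩

lemma cutSup_nonneg : 0 ≤ sSup (cutSet μ V) :=
  le_csSup (bddAbove_cutSet μ hVm hVb) (zero_mem_cutSet μ hVm hVb)

lemma cutSup_le_L1 : sSup (cutSet μ V) ≤ ∫ p, |V p| ∂(μ.prod μ) :=
  csSup_le ⟨0, zero_mem_cutSet μ hVm hVb⟩ (cutSet_le μ hVm hVb)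

lemma abs_setIntegral_le_cutSup {A B : Set S} (hA : MeasurableSet A) (hB : MeasurableSet B) :
    |∫ p in A ×ˢ B, V p ∂(μ.prod μ)| ≤ sSup (cutSet μ V) :=
  le_csSup (bddAbove_cutSet μ hVm hVb) ⟨A, B, hA, hB, rfl⟩

lemma rectComb_integral_bound {F : S × S → ℝ} {c : ℝ} (hF : RectComb F c) :
    |∫ p, F p * V p ∂(μ.prod μ)| ≤ c * sSup (cutSet μ V) := by
  obtain ⟨ι, _, a, A, B, hA, hB, hFeq, rfl⟩ := hF
  have hint : ∀ i : ι, Integrable (fun p => a i *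
      (A i ×ˢ B i).indicator (fun _ => (1:ℝ)) p * V p) (μ.prod μ) := by
    intro i
    have : (fun p => a i * (A i ×ˢ B i).indicator (fun _ => (1:ℝ)) p * V p) =
        fun p => a i * (A i ×ˢ B i).indicator V p := by
      funext p
      by_cases hp : p ∈ A i ×ˢ B i <;> simp [Set.indicator_apply, hp]
    rw [this]
    exact ((integrable_of_bdd μ hVm hVb).indicator ((hA i).prod (hB i))).const_mul _
  have h1 : ∫ p, F p * V p ∂(μ.prod μ) =
      ∑ i, a i * ∫ p in A i ×ˢ B i, V p ∂(μ.prod μ) := by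
    rw [show (fun p => F p * V p) = fun p => ∑ i, a i *
        (A i ×ˢ B i).indicator (fun _ => (1:ℝ)) p * V p by
      funext p; rw [hFeq p, Finset.sum_mul]]
    rw [integral_finset_sum _ fun i _ => hint i]
    refine Finset.sum_congr rfl fun i _ => ?_
    have : (fun p => a i * (A i ×ˢ B i).indicator (fun _ => (1:ℝ)) p * V p) =
        fun p => a i * (A i ×ˢ B i).indicator V p := by
      funext p
      by_cases hp : p ∈ A i ×ˢ B i <;> simp [Set.indicator_apply, hp]
    rw [this, integral_const_mul, integral_indicator ((hA i).prod (hB i))]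
  rw [h1]
  calc |∑ i, a i * ∫ p in A i ×ˢ B i, V p ∂(μ.prod μ)|
      ≤ ∑ i, |a i * ∫ p in A i ×ˢ B i, V p ∂(μ.prod μ)| := Finset.abs_sum_le_sum_abs _ _
    _ ≤ ∑ i, |a i| * sSup (cutSet μ V) := by
        refine Finset.sum_le_sum fun i _ => ?_
        rw [abs_mul]
        exact mul_le_mul_of_nonneg_left
          (abs_setIntegral_le_cutSup μ hVm hVb (hA i) (hB i)) (abs_nonneg _)
    _ = (∑ i, |a i|) * sSup (cutSet μ V) := by rw [Finset.sum_mul]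

end Aux3

section Aux4

set_option linter.unusedSectionVars false

variable {S : Type*} [MeasurableSpace S] (μ : Measure S) [IsProbabilityMeasure μ]

lemma indicator_approx (U : Set (S × S)) (hU : MeasurableSet U) {ε : ℝ} (hε : 0 < ε) :
    ∃ (T : Set (S × S)) (c : ℝ), MeasurableSet T ∧
      RectComb (T.indicator (fun _ => (1:ℝ))) c ∧
      ∫ p, |U.indicator (fun _ => (1:ℝ)) p - T.indicator (fun _ => (1:ℝ)) p| ∂(μ.prod μ)
        < ε := by
  have hgen : (inferInstance : MeasurableSpace (S × S)) =
      MeasurableSpace.generateFrom (MeasureTheory.generateSetAlgebra (rectFamily S)) := by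
    rw [MeasureTheory.generateFrom_generateSetAlgebra_eq]
    exact generateFrom_prod.symm
  have hdense := Measure.MeasureDense.of_generateFrom_isSetAlgebra_finite (μ := μ.prod μ)
    MeasureTheory.isSetAlgebra_generateSetAlgebra hgen
  obtain ⟨T, hTmem, hTapprox⟩ := hdense.approx U hU (measure_ne_top _ _) ε hε
  have hTmeas : MeasurableSet T := hdense.measurable T hTmem
  obtain ⟨c, hc⟩ := rectComb_of_mem_generateSetAlgebra hTmem
  refine ⟨T, c, hTmeas, hc, ?_⟩
  have hpt : (fun p => |U.indicator (fun _ => (1:ℝ)) p - T.indicator (fun _ => (1:ℝ)) p|) =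
      fun p => (symmDiff U T).indicator (1 : S × S → ℝ) p := by
    funext p
    by_cases h1 : p ∈ U <;> by_cases h2 : p ∈ T <;>
      simp [Set.indicator_apply, Set.mem_symmDiff, h1, h2]
  rw [hpt, integral_indicator_one (hU.symmDiff hTmeas)]
  exact ENNReal.toReal_lt_of_lt_ofReal hTapprox

end Aux4

/-- For graphons `W_n` and a random-free graphon `W` on a common probability space,
convergence in the cut norm is equivalent to convergence in `L¹`. -/
theorem cutNorm_tendsto_iff_L1_tendsto {S : Type*} [MeasurableSpace S]
    (μ : Measure S) [IsProbabilityMeasure μ]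
    (W : S → S → ℝ) (Wseq : ℕ → S → S → ℝ)
    (hWm : Measurable (fun p : S × S => W p.1 p.2))
    (hWsym : ∀ x y, W x y = W y x)
    (hWr : ∀ x y, W x y ∈ Set.Icc (0 : ℝ) 1)
    (hW01 : ∀ᵐ p ∂(μ.prod μ), W p.1 p.2 = 0 ∨ W p.1 p.2 = 1)
    (hWnm : ∀ n, Measurable (fun p : S × S => Wseq n p.1 p.2))
    (hWnsym : ∀ n x y, Wseq n x y = Wseq n y x)
    (hWnr : ∀ n x y, Wseq n x y ∈ Set.Icc (0 : ℝ) 1) :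
    Tendsto (fun n => cutNorm1 μ (fun x y => Wseq n x y - W x y)) atTop (nhds 0) ↔
    Tendsto (fun n => ∫ p, |Wseq n p.1 p.2 - W p.1 p.2| ∂(μ.prod μ)) atTop (nhds 0) := by
  set ν := μ.prod μ with hν
  set V : ℕ → S × S → ℝ := fun n p => Wseq n p.1 p.2 - W p.1 p.2 with hV
  have hVm : ∀ n, Measurable (V n) := fun n => (hWnm n).sub hWm
  have hVb : ∀ n p, |V n p| ≤ 1 := by
    intro n p
    have h1 := hWnr n p.1 p.2
    have h2 := hWr p.1 p.2
    rw [abs_le]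
    constructor <;> simp only [hV] <;>
      [linarith [h1.1, h2.2]; linarith [h1.2, h2.1]]
  have hcn : ∀ n, cutNorm1 μ (fun x y => Wseq n x y - W x y) = sSup (cutSet μ (V n)) :=
    fun n => rfl
  constructor
  · -- cut norm → 0 implies L¹ → 0
    intro hcut
    have hU1 : MeasurableSet {p : S × S | W p.1 p.2 = 1} :=
      hWm (measurableSet_singleton 1)
    set U1 : Set (S × S) := {p : S × S | W p.1 p.2 = 1} with hU1def
    have hVint : ∀ n, Integrable (V n) ν := fun n => integrable_of_bdd μ (hVm n) (hVb n)
    have hIndm : Measurable (U1.indicator (fun _ : S × S => (1:ℝ))) :=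
      measurable_const.indicator hU1
    have hIndVint : ∀ n, Integrable
        (fun p => U1.indicator (fun _ : S × S => (1:ℝ)) p * V n p) ν := by
      intro n
      have e : (fun p => U1.indicator (fun _ : S × S => (1:ℝ)) p * V n p) =
          U1.indicator (V n) := by
        funext p
        by_cases hp : p ∈ U1 <;> simp [Set.indicator_apply, hp]
      rw [e]
      exact (hVint n).indicator hU1
    -- key identity
    have hkey : ∀ n, ∫ p, |V n p| ∂ν = (∫ p, V n p ∂ν) -
        2 * ∫ p, U1.indicator (fun _ : S × S => (1:ℝ)) p * V n p ∂ν := by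
      intro n
      have hae : ∀ᵐ p ∂ν, |V n p| = V n p -
          2 * (U1.indicator (fun _ : S × S => (1:ℝ)) p * V n p) := by
        refine hW01.mono fun p hp => ?_
        rcases hp with h0 | h1
        · have hnot : p ∉ U1 := by
            simp only [hU1def, Set.mem_setOf_eq, h0]
            norm_num
          rw [Set.indicator_of_notMem hnot]
          simp only [hV, h0, zero_mul, mul_zero, sub_zero]
          exact abs_of_nonneg (by linarith [(hWnr n p.1 p.2).1])
        · have hmem : p ∈ U1 := h1
          rw [Set.indicator_of_mem hmem]
          have : V n p ≤ 0 := by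
            simp only [hV, h1]
            linarith [(hWnr n p.1 p.2).2]
          rw [abs_of_nonpos this]
          ring
      rw [integral_congr_ae hae, integral_sub (hVint n) ((hIndVint n).const_mul 2),
        integral_const_mul]
    rw [Metric.tendsto_atTop]
    intro ε hε
    obtain ⟨T, c, hT, hRC, hTapprox⟩ := indicator_approx μ U1 hU1
      (show (0:ℝ) < ε / 4 by linarith)
    have hc0 : 0 ≤ c := hRC.c_nonneg
    have hδ : (0:ℝ) < ε / (4 * (1 + c)) := by positivity
    have hev : ∀ᶠ n in atTop, sSup (cutSet μ (V n)) < ε / (4 * (1 + c)) := by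
      have := hcut.eventually (gt_mem_nhds hδ)
      simpa only [hcn] using this
    obtain ⟨N, hN⟩ := eventually_atTop.mp hev
    refine ⟨N, fun n hn => ?_⟩
    have hcut_n := hN n hn
    have hcut_nonneg := cutSup_nonneg μ (hVm n) (hVb n)
    -- bound on ∫ V n
    have h2 : |∫ p, V n p ∂ν| ≤ sSup (cutSet μ (V n)) := by
      have e : ∫ p, V n p ∂ν = ∫ p in (Set.univ : Set S) ×ˢ (Set.univ : Set S), V n p ∂ν := by
        rw [Set.univ_prod_univ, Measure.restrict_univ]
      rw [e]
      exact abs_setIntegral_le_cutSup μ (hVm n) (hVb n)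
        MeasurableSet.univ MeasurableSet.univ
    -- bound on the indicator integral
    set d : S × S → ℝ := fun p => U1.indicator (fun _ : S × S => (1:ℝ)) p -
      T.indicator (fun _ : S × S => (1:ℝ)) p with hd
    have hdm : Measurable d := hIndm.sub (measurable_const.indicator hT)
    have hdb : ∀ p, |d p| ≤ 1 := by
      intro p
      simp only [hd]
      by_cases h1 : p ∈ U1 <;> by_cases h2 : p ∈ T <;>
        simp [Set.indicator_apply, h1, h2]
    have hdVint : Integrable (fun p => d p * V n p) ν := by
      refine integrable_of_bdd μ (hdm.mul (hVm n)) fun p => ?_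
      rw [abs_mul]
      exact mul_le_one₀ (hdb p) (abs_nonneg _) (hVb n p)
    have hdint : Integrable (fun p => |d p|) ν :=
      (integrable_of_bdd μ hdm hdb).abs
    have hTVint : Integrable (fun p => T.indicator (fun _ : S × S => (1:ℝ)) p * V n p) ν := by
      refine integrable_of_bdd μ ((measurable_const.indicator hT).mul (hVm n)) fun p => ?_
      rw [abs_mul]
      refine mul_le_one₀ ?_ (abs_nonneg _) (hVb n p)
      by_cases h2 : p ∈ T <;> simp [Set.indicator_apply, h2]
    have hsplit : ∫ p, U1.indicator (fun _ : S × S => (1:ℝ)) p * V n p ∂ν =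
        (∫ p, d p * V n p ∂ν) + ∫ p, T.indicator (fun _ : S × S => (1:ℝ)) p * V n p ∂ν := by
      rw [← integral_add hdVint hTVint]
      congr 1
      funext p
      simp only [hd]
      ring
    have hb1 : |∫ p, d p * V n p ∂ν| ≤ ∫ p, |d p| ∂ν := by
      calc |∫ p, d p * V n p ∂ν| ≤ ∫ p, |d p * V n p| ∂ν := by
            simpa only [Real.norm_eq_abs] using norm_integral_le_integral_norm (μ := ν)
              (fun p => d p * V n p)
        _ ≤ ∫ p, |d p| ∂ν := by
            refine integral_mono hdVint.abs hdint fun p => ?_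
            rw [abs_mul]
            calc |d p| * |V n p| ≤ |d p| * 1 :=
                  mul_le_mul_of_nonneg_left (hVb n p) (abs_nonneg _)
              _ = |d p| := mul_one _
    have hb1' : ∫ p, |d p| ∂ν < ε / 4 := by
      simpa only [hd] using hTapprox
    have hb2 : |∫ p, T.indicator (fun _ : S × S => (1:ℝ)) p * V n p ∂ν| ≤
        c * sSup (cutSet μ (V n)) :=
      rectComb_integral_bound μ (hVm n) (hVb n) hRC
    have hind_bound : |∫ p, U1.indicator (fun _ : S × S => (1:ℝ)) p * V n p ∂ν| ≤
        ε / 4 + c * sSup (cutSet μ (V n)) := by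
      rw [hsplit]
      calc |(∫ p, d p * V n p ∂ν) + ∫ p, T.indicator (fun _ : S × S => (1:ℝ)) p * V n p ∂ν|
          ≤ |∫ p, d p * V n p ∂ν| +
            |∫ p, T.indicator (fun _ : S × S => (1:ℝ)) p * V n p ∂ν| := abs_add_le _ _
        _ ≤ ε / 4 + c * sSup (cutSet μ (V n)) :=
            add_le_add (le_of_lt (lt_of_le_of_lt hb1 hb1')) hb2
    -- put it all together
    have hL1 : ∫ p, |V n p| ∂ν ≤ sSup (cutSet μ (V n)) +
        2 * (ε / 4 + c * sSup (cutSet μ (V n))) := by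
      rw [hkey n]
      have := abs_le.mp h2
      have := abs_le.mp hind_bound
      linarith [this.1, this.2]
    have hnonneg : 0 ≤ ∫ p, |V n p| ∂ν :=
      integral_nonneg fun p => abs_nonneg _
    rw [Real.dist_eq, sub_zero, abs_of_nonneg hnonneg]
    have hfin : (1 + 2 * c) * sSup (cutSet μ (V n)) < ε / 2 := by
      have h1 : (1 + 2 * c) * sSup (cutSet μ (V n)) ≤
          (2 * (1 + c)) * sSup (cutSet μ (V n)) := by nlinarith
      have h2' : (2 * (1 + c)) * sSup (cutSet μ (V n)) <
          (2 * (1 + c)) * (ε / (4 * (1 + c))) := by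
        apply mul_lt_mul_of_pos_left hcut_n
        positivity
      have h3 : (2 * (1 + c)) * (ε / (4 * (1 + c))) = ε / 2 := by
        field_simp
        ring
      linarith
    calc ∫ p, |V n p| ∂ν ≤ sSup (cutSet μ (V n)) +
          2 * (ε / 4 + c * sSup (cutSet μ (V n))) := hL1
      _ = (1 + 2 * c) * sSup (cutSet μ (V n)) + ε / 2 := by ring
      _ < ε / 2 + ε / 2 := by linarith
      _ = ε := by ring
  · -- L¹ → 0 implies cut norm → 0
    intro hL1
    simp only [hcn]
    exact squeeze_zero (fun n => cutSup_nonneg μ (hVm n) (hVb n))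
      (fun n => cutSup_le_L1 μ (hVm n) (hVb n)) hL1
end
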